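/- Let N ≥ 1, let w, w' ∈ ℝ^N be real vectors, and set D = i·diag(w₁, …, w_N) and D' = i·diag(w'₁, …, w'_N) (diagonal skew-Hermitian matrices). Then for every N×N complex matrix Y, tr([Y, D]† · [Y, D']) = ∑_{i,j=1}^{N} |Y_{ij}|² (w_j − w_i)(w'_j − w'_i). In particular this trace is a real number. -/

import Mathlib

open Matrix

/-- for `D = i·diag(w)` and `D' = i·diag(w')` with `w, w'` real vectors, and any
complex matrix `Y`, `tr([Y,D]† [Y,D']) = ∑_{i,j} |Y_{ij}|² (w_j - w_i)(w'_j - w'_i)`;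
in particular the trace is a real number. -/
theorem trace_commutator_diagonal
    {N : ℕ} (hN : 1 ≤ N) (w w' : Fin N → ℝ)
    (Y : Matrix (Fin N) (Fin N) ℂ) :
    Matrix.trace
        ((Y * (Complex.I • Matrix.diagonal (fun i => (w i : ℂ)))
            - (Complex.I • Matrix.diagonal (fun i => (w i : ℂ))) * Y)ᴴ
          * (Y * (Complex.I • Matrix.diagonal (fun i => (w' i : ℂ)))
            - (Complex.I • Matrix.diagonal (fun i => (w' i : ℂ))) * Y))
      = ((∑ i : Fin N, ∑ j : Fin N,
          ‖Y i j‖ ^ 2 * (w j - w i) * (w' j - w' i) : ℝ) : ℂ) := by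
  have hC : ∀ (v : Fin N → ℝ) (i j : Fin N),
      (Y * (Complex.I • Matrix.diagonal (fun i => (v i : ℂ)))
        - (Complex.I • Matrix.diagonal (fun i => (v i : ℂ))) * Y) i j
      = Complex.I * Y i j * ((v j : ℂ) - v i) := by
    intro v i j
    simp [Matrix.mul_apply, Matrix.diagonal, Matrix.sub_apply, mul_comm]
    ring
  rw [Matrix.trace]
  push_cast
  simp only [Matrix.diag_apply, Matrix.mul_apply, Matrix.conjTranspose_apply, hC]
  rw [Finset.sum_comm]
  refine Finset.sum_congr rfl fun i _ => Finset.sum_congr rfl fun j _ => ?_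
  have h2 : (‖Y i j‖ : ℂ) ^ 2 = (starRingEnd ℂ) (Y i j) * Y i j := by
    rw [← Complex.ofReal_pow, Complex.sq_norm, Complex.normSq_eq_conj_mul_self]
  rw [h2]
  simp only [Complex.star_def, _root_.map_mul, map_sub, Complex.conj_I, Complex.conj_ofReal]
  ring_nf
  rw [Complex.I_sq]
  ring
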